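/- With P_h and Q_h the convergent polynomials of the square series J-fraction, for every h ≥ 1 and every 0 ≤ n < 2h, the coefficient of z^n in the formal power series expansion of P_h(q,z)/Q_h(q,z) equals q^{n²}. -/

import Mathlib

/-- The rational function field in the indeterminate `q`. -/
noncomputable abbrev Kq : Type := RatFunc ℚ

/-- The indeterminate `q` of the rational function field. -/
noncomputable def qvar : Kq := RatFunc.X

/-- The numerator convergents `P_h(q, z)`, as formal power series in `z = X` over the field of
rational functions in `q`. -/
noncomputable def Pser : ℕ → PowerSeries Kq
  | 0 => 0
  | 1 => 1
  | (h + 2) =>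
      (1 - PowerSeries.C (qvar ^ (2 * (h + 2) - 3) *
            (qvar ^ (2 * (h + 2)) + qvar ^ (2 * (h + 2) - 2) - 1)) * PowerSeries.X) *
          Pser (h + 1)
        - PowerSeries.C (qvar ^ (6 * (h + 2) - 10) * (qvar ^ (2 * (h + 2) - 2) - 1)) *
            PowerSeries.X ^ 2 * Pser h

/-- The denominator convergents `Q_h(q, z)`, as formal power series in `z = X` over the field of
rational functions in `q`. -/
noncomputable def Qser : ℕ → PowerSeries Kq
  | 0 => 1
  | 1 => 1 - PowerSeries.C qvar * PowerSeries.X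
  | (h + 2) =>
      (1 - PowerSeries.C (qvar ^ (2 * (h + 2) - 3) *
            (qvar ^ (2 * (h + 2)) + qvar ^ (2 * (h + 2) - 2) - 1)) * PowerSeries.X) *
          Qser (h + 1)
        - PowerSeries.C (qvar ^ (6 * (h + 2) - 10) * (qvar ^ (2 * (h + 2) - 2) - 1)) *
            PowerSeries.X ^ 2 * Qser h

open PowerSeries Finset

lemma qvar_ne : (qvar : Kq) ≠ 0 := RatFunc.X_ne_zero

/-- two-step induction -/
lemma two_step (P : ℕ → Prop) (h0 : P 0) (h1 : P 1)
    (step : ∀ n, P n → P (n + 1) → P (n + 2)) : ∀ n, P n := by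
  intro n
  induction n using Nat.strong_induction_on with
  | _ n ih =>
    match n with
    | 0 => exact h0
    | 1 => exact h1
    | (m + 2) => exact step m (ih m (by omega)) (ih (m + 1) (by omega))

/-- The coefficient `c_{h+2}`. -/
noncomputable def cc (h : ℕ) : Kq := qvar ^ (2*h+1) * (qvar ^ (2*h+4) + qvar ^ (2*h+2) - 1)
/-- The coefficient `ab_{h+2}`. -/
noncomputable def aabb (h : ℕ) : Kq := qvar ^ (6*h+2) * (qvar ^ (2*h+2) - 1)

lemma Qrec (h : ℕ) : Qser (h+2)
    = (1 - PowerSeries.C (cc h) * X) * Qser (h+1)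
      - PowerSeries.C (aabb h) * X^2 * Qser h := by
  have e1 : 2 * (h + 2) - 3 = 2*h+1 := by omega
  have e2 : 2 * (h + 2) = 2*h+4 := by omega
  have e3 : 2 * (h + 2) - 2 = 2*h+2 := by omega
  have e4 : 6 * (h + 2) - 10 = 6*h+2 := by omega
  rw [Qser, e1, e4, e3, e2, cc, aabb]

lemma Prec (h : ℕ) : Pser (h+2)
    = (1 - PowerSeries.C (cc h) * X) * Pser (h+1)
      - PowerSeries.C (aabb h) * X^2 * Pser h := by
  have e1 : 2 * (h + 2) - 3 = 2*h+1 := by omega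
  have e2 : 2 * (h + 2) = 2*h+4 := by omega
  have e3 : 2 * (h + 2) - 2 = 2*h+2 := by omega
  have e4 : 6 * (h + 2) - 10 = 6*h+2 := by omega
  rw [Pser, e1, e4, e3, e2, cc, aabb]

lemma coeff_rec2 (a b : Kq) (A B : PowerSeries Kq) (n : ℕ) :
    PowerSeries.coeff (n+2) ((1 - PowerSeries.C a * X) * A - PowerSeries.C b * X^2 * B)
      = PowerSeries.coeff (n+2) A - a * PowerSeries.coeff (n+1) A
        - b * PowerSeries.coeff n B := by
  have h1 : (1 - PowerSeries.C a * X) * A - PowerSeries.C b * X^2 * B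
      = A - PowerSeries.C a * (X * A) - PowerSeries.C b * (X * (X * B)) := by ring
  rw [h1, map_sub, map_sub, coeff_C_mul, coeff_C_mul, coeff_succ_X_mul,
    coeff_succ_X_mul, coeff_succ_X_mul]

lemma coeff_rec0 (a b : Kq) (A B : PowerSeries Kq) :
    PowerSeries.coeff 0 ((1 - PowerSeries.C a * X) * A - PowerSeries.C b * X^2 * B)
      = PowerSeries.coeff 0 A := by
  have h1 : (1 - PowerSeries.C a * X) * A - PowerSeries.C b * X^2 * B
      = A - PowerSeries.C a * (X * A) - PowerSeries.C b * (X * (X * B)) := by ring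
  rw [h1, map_sub, map_sub, coeff_C_mul, coeff_C_mul, coeff_zero_X_mul, coeff_zero_X_mul,
    mul_zero, mul_zero, sub_zero, sub_zero]

lemma coeff_rec1 (a b : Kq) (A B : PowerSeries Kq) :
    PowerSeries.coeff 1 ((1 - PowerSeries.C a * X) * A - PowerSeries.C b * X^2 * B)
      = PowerSeries.coeff 1 A - a * PowerSeries.coeff 0 A := by
  have h1 : (1 - PowerSeries.C a * X) * A - PowerSeries.C b * X^2 * B
      = A - PowerSeries.C a * (X * A) - PowerSeries.C b * (X * (X * B)) := by ring
  have h2 : (1 : ℕ) = 0 + 1 := rfl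
  rw [h1, map_sub, map_sub, coeff_C_mul, coeff_C_mul, h2, coeff_succ_X_mul, coeff_succ_X_mul,
    coeff_zero_X_mul, mul_zero, sub_zero]

/-- `q^2` -/
noncomputable def Q2 : Kq := qvar ^ 2

lemma Q2_ne : Q2 ≠ 0 := pow_ne_zero _ qvar_ne

lemma zph (a b : ℕ) : Q2 ^ ((a : ℤ) - (b : ℤ)) = qvar ^ (2*a) / qvar ^ (2*b) := by
  rw [zpow_sub₀ Q2_ne, zpow_natCast, zpow_natCast, Q2, ← pow_mul, ← pow_mul]

lemma zphneg (b : ℕ) : Q2 ^ (-(b : ℤ)) = 1 / qvar ^ (2*b) := by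
  have := zph 0 b; simpa using this

/-- partial products -/
noncomputable def pp (h : ℕ) (w : ℤ) : Kq := ∏ j ∈ Finset.range h, (1 - Q2 ^ ((j : ℤ) - w))

lemma pp_top (h : ℕ) (w : ℤ) : pp (h+1) w = pp h w * (1 - Q2 ^ ((h : ℤ) - w)) := by
  rw [pp, prod_range_succ]; rfl

lemma pp_bot (h : ℕ) (w : ℤ) : pp (h+1) w = pp h (w - 1) * (1 - Q2 ^ (-w)) := by
  rw [pp, prod_range_succ']
  congr 1
  · exact Finset.prod_congr rfl fun j _ => by congr 1; push_cast; ring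
  · congr 1; push_cast; ring

/-- the coefficient of `z^n` in `F·Q_h`, for `n ≥ h`. -/
noncomputable def ee (h n : ℕ) : Kq := qvar ^ (n ^ 2) * pp h ((n : ℤ) - (h : ℤ))

lemma starScalar (h m : ℕ) :
    qvar ^ ((m+2)^2) * ((1 - Q2 ^ (((2*h : ℕ) : ℤ) - (m : ℤ))) *
        (1 - Q2 ^ (((2*h+1 : ℕ) : ℤ) - (m : ℤ))))
      = qvar ^ ((m+2)^2) * (1 - Q2 ^ (((h : ℕ) : ℤ) - ((m+1 : ℕ) : ℤ)))
        - cc h * (qvar ^ ((m+1)^2) * (1 - Q2 ^ (((2*h : ℕ) : ℤ) - (m : ℤ))))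
        - aabb h * qvar ^ (m^2) := by
  have r1 : (qvar : Kq) ^ ((m+2)^2) = qvar ^ (m^2) * qvar ^ (4*m) * qvar ^ 4 := by
    rw [show (m+2)^2 = m^2 + 4*m + 4 by ring, pow_add, pow_add]
  have r2 : (qvar : Kq) ^ ((m+1)^2) = qvar ^ (m^2) * qvar ^ (2*m) * qvar := by
    rw [show (m+1)^2 = m^2 + 2*m + 1 by ring, pow_add, pow_add, pow_one]
  rw [zph, zph, zph, cc, aabb, r1, r2]
  have h4 : (qvar : Kq) ^ (4*m) = qvar ^ (2*m) * qvar ^ (2*m) := by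
    rw [show 4*m = 2*m + (2*m) by ring, pow_add]
  have h5 : (qvar : Kq) ^ (2*(m+1)) = qvar ^ (2*m) * qvar ^ 2 := by
    rw [show 2*(m+1) = 2*m + 2 by ring, pow_add]
  rw [h4, h5]
  have hm : (qvar : Kq) ^ (2*m) ≠ 0 := pow_ne_zero _ qvar_ne
  field_simp [qvar_ne]
  ring

lemma star (h m : ℕ) :
    ee (h+2) (m+2) = ee (h+1) (m+2) - cc h * ee (h+1) (m+1) - aabb h * ee h m := by
  have c1 : ((m+2 : ℕ) : ℤ) - ((h+2 : ℕ) : ℤ) = (m : ℤ) - (h : ℤ) := by push_cast; ring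
  have c2 : ((m+2 : ℕ) : ℤ) - ((h+1 : ℕ) : ℤ) = ((m : ℤ) - (h : ℤ)) + 1 := by push_cast; ring
  have c3 : ((m+1 : ℕ) : ℤ) - ((h+1 : ℕ) : ℤ) = (m : ℤ) - (h : ℤ) := by push_cast; ring
  rw [ee, ee, ee, ee, c1, c2, c3, pp_top (h+1) ((m : ℤ) - (h : ℤ)),
    pp_bot h (((m : ℤ) - (h : ℤ)) + 1), pp_top h ((m : ℤ) - (h : ℤ)), add_sub_cancel_right]
  have d1 : ((h : ℤ)) - ((m : ℤ) - (h : ℤ)) = ((2*h : ℕ) : ℤ) - (m : ℤ) := by push_cast; ring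
  have d2 : (((h+1 : ℕ)) : ℤ) - ((m : ℤ) - (h : ℤ)) = ((2*h+1 : ℕ) : ℤ) - (m : ℤ) := by
    push_cast; ring
  have d3 : -(((m : ℤ) - (h : ℤ)) + 1) = ((h : ℕ) : ℤ) - ((m+1 : ℕ) : ℤ) := by push_cast; ring
  rw [d1, d2, d3]
  linear_combination pp h ((m : ℤ) - (h : ℤ)) * starScalar h m

lemma bnd1 (h : ℕ) : ee (h+1) (2*h+2) = aabb h * ee h (2*h) := by
  have c1 : ((2*h+2 : ℕ) : ℤ) - ((h+1 : ℕ) : ℤ) = ((h : ℤ) + 1) := by push_cast; ring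
  have c2 : ((2*h : ℕ) : ℤ) - ((h : ℕ) : ℤ) = (h : ℤ) := by push_cast; ring
  rw [ee, ee, c1, c2, pp_bot h, add_sub_cancel_right]
  have d1 : -((h : ℤ) + 1) = -(((h+1 : ℕ)) : ℤ) := by push_cast; ring
  rw [d1, zphneg]
  have r1 : (qvar : Kq) ^ ((2*h+2)^2) = qvar ^ ((2*h)^2) * qvar ^ (8*h+4) := by
    rw [show (2*h+2)^2 = (2*h)^2 + (8*h+4) by ring, pow_add]
  have r2 : (qvar : Kq) ^ (2*(h+1)) = qvar ^ (2*h) * qvar ^ 2 := by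
    rw [show 2*(h+1) = 2*h + 2 by ring, pow_add]
  have r3 : (qvar : Kq) ^ (8*h+4) = (qvar ^ (2*h))^4 * qvar ^ 4 := by
    rw [← pow_mul, ← pow_add]; congr 1; ring
  rw [aabb, r1, r2, r3]
  have hm : (qvar : Kq) ^ (2*h) ≠ 0 := pow_ne_zero _ qvar_ne
  have r4 : (qvar : Kq) ^ (6*h+2) = (qvar ^ (2*h))^3 * qvar ^ 2 := by
    rw [← pow_mul, ← pow_add]; congr 1; ring
  have r5 : (qvar : Kq) ^ (2*h+2) = (qvar ^ (2*h)) * qvar ^ 2 := by rw [pow_add]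
  rw [r4, r5]
  field_simp [qvar_ne]

lemma bnd2 (h : ℕ) :
    ee (h+1) (2*h+3) = cc h * ee (h+1) (2*h+2) + aabb h * ee h (2*h+1) := by
  have c1 : ((2*h+3 : ℕ) : ℤ) - ((h+1 : ℕ) : ℤ) = ((h : ℤ) + 2) := by push_cast; ring
  have c2 : ((2*h+2 : ℕ) : ℤ) - ((h+1 : ℕ) : ℤ) = ((h : ℤ) + 1) := by push_cast; ring
  have c3 : ((2*h+1 : ℕ) : ℤ) - ((h : ℕ) : ℤ) = ((h : ℤ) + 1) := by push_cast; ring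
  rw [ee, ee, ee, c1, c2, c3, pp_bot h ((h : ℤ) + 2), pp_top h ((h : ℤ) + 1)]
  have d0 : ((h : ℤ) + 2) - 1 = (h : ℤ) + 1 := by ring
  have d1 : -((h : ℤ) + 2) = -(((h+2 : ℕ)) : ℤ) := by push_cast; ring
  have d2 : ((h : ℤ)) - ((h : ℤ) + 1) = -(((1 : ℕ)) : ℤ) := by push_cast; ring
  rw [d0, d1, d2, zphneg, zphneg]
  have r1 : (qvar : Kq) ^ ((2*h+3)^2) = qvar ^ ((2*h+1)^2) * (qvar ^ (2*h))^4 * qvar ^ 8 := by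
    rw [show (2*h+3)^2 = (2*h+1)^2 + 2*h*4 + 8 by ring, pow_add, pow_add, pow_mul]
  have r2 : (qvar : Kq) ^ ((2*h+2)^2) = qvar ^ ((2*h+1)^2) * (qvar ^ (2*h))^2 * qvar ^ 3 := by
    rw [show (2*h+2)^2 = (2*h+1)^2 + 2*h*2 + 3 by ring, pow_add, pow_add, pow_mul]
  have r3 : (qvar : Kq) ^ (2*(h+2)) = qvar ^ (2*h) * qvar ^ 4 := by
    rw [show 2*(h+2) = 2*h + 4 by ring, pow_add]
  have r4 : (qvar : Kq) ^ (2*h+1) = qvar ^ (2*h) * qvar := by rw [pow_succ]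
  have r5 : (qvar : Kq) ^ (2*h+4) = qvar ^ (2*h) * qvar ^ 4 := by rw [pow_add]
  have r6 : (qvar : Kq) ^ (2*h+2) = qvar ^ (2*h) * qvar ^ 2 := by rw [pow_add]
  have r7 : (qvar : Kq) ^ (6*h+2) = (qvar ^ (2*h))^3 * qvar ^ 2 := by
    rw [← pow_mul, ← pow_add]; congr 1; ring
  rw [cc, aabb, r1, r2, r3, r4, r5, r6, r7]
  have hm : (qvar : Kq) ^ (2*h) ≠ 0 := pow_ne_zero _ qvar_ne
  field_simp [qvar_ne]
  ring

/-- the square series -/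
noncomputable def Fs : PowerSeries Kq := PowerSeries.mk fun n => qvar ^ (n ^ 2)

lemma key : ∀ h, ∀ n, h ≤ n → PowerSeries.coeff n (Fs * Qser h) = ee h n := by
  apply two_step
  · intro n _
    have : Qser 0 = 1 := rfl
    rw [this, mul_one, Fs, coeff_mk, ee, pp]
    simp
  · intro n hn
    obtain ⟨m, rfl⟩ : ∃ m, n = m + 1 := ⟨n - 1, by omega⟩
    have hq1 : Qser 1 = 1 - PowerSeries.C qvar * X := rfl
    have h1 : Fs * Qser 1 = Fs - PowerSeries.C qvar * (X * Fs) := by rw [hq1]; ring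
    rw [h1, map_sub, coeff_C_mul, coeff_succ_X_mul, Fs, coeff_mk, coeff_mk, ee, pp]
    rw [prod_range_one]
    have d1 : ((0 : ℕ) : ℤ) - (((m+1 : ℕ) : ℤ) - ((1 : ℕ) : ℤ)) = -((m : ℕ) : ℤ) := by
      push_cast; ring
    rw [d1, zphneg]
    have r1 : (qvar : Kq) ^ ((m+1)^2) = qvar ^ (m^2) * qvar ^ (2*m) * qvar := by
      rw [show (m+1)^2 = m^2 + 2*m + 1 by ring, pow_add, pow_add, pow_one]
    rw [r1]
    have hm : (qvar : Kq) ^ (2*m) ≠ 0 := pow_ne_zero _ qvar_ne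
    field_simp
  · intro h ih1 ih2 n hn
    obtain ⟨m, rfl⟩ : ∃ m, n = m + 2 := ⟨n - 2, by omega⟩
    have expand : Fs * Qser (h+2)
        = (1 - PowerSeries.C (cc h) * X) * (Fs * Qser (h+1))
          - PowerSeries.C (aabb h) * X^2 * (Fs * Qser h) := by rw [Qrec]; ring
    rw [expand, coeff_rec2, ih2 (m+2) (by omega), ih2 (m+1) (by omega), ih1 m (by omega)]
    exact (star h m).symm

lemma degP : ∀ h, ∀ n, h ≤ n → PowerSeries.coeff n (Pser h) = 0 := by
  apply two_step
  · intro n _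
    have : Pser 0 = 0 := rfl
    rw [this, map_zero]
  · intro n hn
    have : Pser 1 = 1 := rfl
    rw [this, coeff_one, if_neg (by omega)]
  · intro h ih1 ih2 n hn
    obtain ⟨m, rfl⟩ : ∃ m, n = m + 2 := ⟨n - 2, by omega⟩
    rw [Prec, coeff_rec2, ih2 (m+2) (by omega), ih2 (m+1) (by omega), ih1 m (by omega)]
    ring

lemma Dvanish : ∀ h, ∀ n, n < 2*h → PowerSeries.coeff n (Fs * Qser h - Pser h) = 0 := by
  apply two_step
  · intro n hn; omega
  · intro n hn
    have hq1 : Qser 1 = 1 - PowerSeries.C qvar * X := rfl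
    have hp1 : Pser 1 = 1 := rfl
    have h1 : Fs * Qser 1 - Pser 1 = Fs - PowerSeries.C qvar * (X * Fs) - 1 := by
      rw [hq1, hp1]; ring
    interval_cases n
    · rw [h1, map_sub, map_sub, coeff_C_mul, coeff_zero_X_mul, Fs, coeff_mk]
      norm_num
    · rw [h1, map_sub, map_sub, coeff_C_mul, show (1:ℕ) = 0 + 1 from rfl, coeff_succ_X_mul,
        Fs, coeff_mk, coeff_mk, coeff_one]
      norm_num
  · intro h ih1 ih2 n hn
    have hd : Fs * Qser (h+2) - Pser (h+2)
        = (1 - PowerSeries.C (cc h) * X) * (Fs * Qser (h+1) - Pser (h+1))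
          - PowerSeries.C (aabb h) * X^2 * (Fs * Qser h - Pser h) := by
      rw [Qrec, Prec]; ring
    match n, hn with
    | 0, hn => rw [hd, coeff_rec0]; exact ih2 0 (by omega)
    | 1, hn => rw [hd, coeff_rec1, ih2 1 (by omega), ih2 0 (by omega)]; ring
    | (m+2), hn =>
      rw [hd, coeff_rec2]
      have hm : m < 2*h ∨ m = 2*h ∨ m = 2*h + 1 := by omega
      rcases hm with hm | hm | hm
      · rw [ih2 (m+2) (by omega), ih2 (m+1) (by omega), ih1 m (by omega)]; ring
      · subst hm
        have e1 : PowerSeries.coeff (2*h+2) (Fs * Qser (h+1) - Pser (h+1))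
            = ee (h+1) (2*h+2) := by
          rw [map_sub, key (h+1) (2*h+2) (by omega), degP (h+1) (2*h+2) (by omega), sub_zero]
        have e2 : PowerSeries.coeff (2*h) (Fs * Qser h - Pser h) = ee h (2*h) := by
          rw [map_sub, key h (2*h) (by omega), degP h (2*h) (by omega), sub_zero]
        rw [e1, e2, ih2 (2*h+1) (by omega), bnd1]
        ring
      · subst hm
        have e1 : PowerSeries.coeff (2*h+3) (Fs * Qser (h+1) - Pser (h+1))
            = ee (h+1) (2*h+3) := by
          rw [map_sub, key (h+1) (2*h+3) (by omega), degP (h+1) (2*h+3) (by omega), sub_zero]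
        have e2 : PowerSeries.coeff (2*h+2) (Fs * Qser (h+1) - Pser (h+1))
            = ee (h+1) (2*h+2) := by
          rw [map_sub, key (h+1) (2*h+2) (by omega), degP (h+1) (2*h+2) (by omega), sub_zero]
        have e3 : PowerSeries.coeff (2*h+1) (Fs * Qser h - Pser h) = ee h (2*h+1) := by
          rw [map_sub, key h (2*h+1) (by omega), degP h (2*h+1) (by omega), sub_zero]
        rw [show 2*h+1+2 = 2*h+3 by ring, show 2*h+1+1 = 2*h+2 by ring, e1, e2, e3, bnd2]
        ring

lemma constQ : ∀ h, PowerSeries.constantCoeff (Qser h) = 1 := by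
  apply two_step
  · have : Qser 0 = 1 := rfl
    rw [this, map_one]
  · have : Qser 1 = 1 - PowerSeries.C qvar * X := rfl
    rw [this]
    simp
  · intro h ih1 ih2
    rw [← PowerSeries.coeff_zero_eq_constantCoeff] at ih2 ⊢
    rw [Qrec, coeff_rec0]
    exact ih2

theorem stmt8 (h n : ℕ) (hh : 1 ≤ h) (hn : n < 2 * h) :
    PowerSeries.coeff n (Pser h * (Qser h)⁻¹) = qvar ^ (n ^ 2) := by
  have hQu : Qser h * (Qser h)⁻¹ = 1 :=
    PowerSeries.mul_inv_cancel _ (by rw [constQ]; exact one_ne_zero)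
  have hsplit : Pser h * (Qser h)⁻¹ = Fs - (Fs * Qser h - Pser h) * (Qser h)⁻¹ := by
    have h2 : Fs - (Fs * Qser h - Pser h) * (Qser h)⁻¹
        = Fs - Fs * (Qser h * (Qser h)⁻¹) + Pser h * (Qser h)⁻¹ := by ring
    rw [h2, hQu, mul_one, sub_self, zero_add]
  rw [hsplit, map_sub]
  have hz : PowerSeries.coeff n ((Fs * Qser h - Pser h) * (Qser h)⁻¹) = 0 := by
    rw [PowerSeries.coeff_mul]
    apply Finset.sum_eq_zero
    intro p hp
    rw [Finset.HasAntidiagonal.mem_antidiagonal] at hp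
    rw [Dvanish h p.1 (by omega), zero_mul]
  rw [hz, sub_zero, Fs, coeff_mk]
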